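/- arXiv:2406.15099 — 6 statements merged into one kernel-verified Lean document; each statement's English description precedes it below -/
import Mathlib

section
/- Given functions β₁, β₂, β₃ of class K∞ (continuous, strictly increasing, unbounded, zero at zero, mapping [0,∞) to [0,∞)) and a constant μ ≥ 0, there exists a function η of class K∞ such that η(β₁(s))·β₂(s) ≤ β₃(s) for all s in [0, μ]. -/
/-- A function `f : ℝ → ℝ` is of class K∞ on `[0,∞)`: continuous, strictly increasing,
zero at zero, nonnegative, and unbounded. -/
def IsKInf (f : ℝ → ℝ) : Prop :=
  ContinuousOn f (Set.Ici 0) ∧ StrictMonoOn f (Set.Ici 0) ∧ f 0 = 0 ∧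
  (∀ s ∈ Set.Ici (0:ℝ), 0 ≤ f s) ∧ (∀ M : ℝ, ∃ s ∈ Set.Ici (0:ℝ), M ≤ f s)

lemma isKInf_id : IsKInf (fun x => x) := by
  refine ⟨continuousOn_id, fun a _ b _ h => h, rfl, fun s hs => hs, fun M => ?_⟩
  exact ⟨max M 0, Set.mem_Ici.mpr (le_max_right _ _), le_max_left _ _⟩

theorem stmt_0 (β₁ β₂ β₃ : ℝ → ℝ) (h1 : IsKInf β₁) (h2 : IsKInf β₂) (h3 : IsKInf β₃)
    (μ : ℝ) (hμ : 0 ≤ μ) :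
    ∃ η : ℝ → ℝ, IsKInf η ∧ ∀ s ∈ Set.Icc (0:ℝ) μ, η (β₁ s) * β₂ s ≤ β₃ s := by
  obtain ⟨h1c, h1m, h1z, h1n, h1u⟩ := h1
  obtain ⟨h2c, h2m, h2z, h2n, h2u⟩ := h2
  obtain ⟨h3c, h3m, h3z, h3n, h3u⟩ := h3
  rcases eq_or_lt_of_le hμ with hμ0 | hμ0
  · refine ⟨fun x => x, isKInf_id, fun s hs => ?_⟩
    have hs0 : s = 0 := le_antisymm (hs.2.trans hμ0.symm.le) hs.1
    subst hs0
    simp [h1z, h2z, h3z.symm.le, h3z]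
  -- μ > 0 case
  · set F : ℝ → ℝ := fun x => if 0 ≤ x then β₁ x else x with hF
    have hFmono : StrictMono F := by
      intro x y hxy
      by_cases hx : 0 ≤ x
      · have hy : 0 ≤ y := hx.trans hxy.le
        simpa [hF, hx, hy] using h1m hx hy hxy
      · by_cases hy : 0 ≤ y
        · have : β₁ y ≥ 0 := h1n y hy
          simp only [hF, hx, hy, if_true, if_false]
          linarith [not_le.mp hx]
        · simpa [hF, hx, hy] using hxy
    have hFsurj : Function.Surjective F := by
      intro y
      by_cases hy : 0 ≤ y
      · obtain ⟨s, hs, hsy⟩ := h1u y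
        have hcont : ContinuousOn β₁ (Set.Icc 0 s) :=
          h1c.mono (fun x hx => hx.1)
        have : y ∈ Set.Icc (β₁ 0) (β₁ s) := by rw [h1z]; exact ⟨hy, hsy⟩
        obtain ⟨x, hx, hxy⟩ := intermediate_value_Icc hs hcont this
        exact ⟨x, by simpa [hF, hx.1] using hxy⟩
      · exact ⟨y, by simp [hF, hy]⟩
    set e : ℝ ≃o ℝ := StrictMono.orderIsoOfSurjective F hFmono hFsurj with he
    have heF : ∀ x, e x = F x := fun x => rfl
    have hG0 : e.symm 0 = 0 := by
      have : e 0 = 0 := by rw [heF]; simp [hF, h1z]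
      simpa using (congrArg e.symm this).symm
    have hGnn : ∀ t : ℝ, 0 ≤ t → 0 ≤ e.symm t := by
      intro t ht
      calc (0:ℝ) = e.symm 0 := hG0.symm
        _ ≤ e.symm t := e.symm.monotone ht
    have hGβ : ∀ s : ℝ, 0 ≤ s → e.symm (β₁ s) = s := by
      intro s hs
      have : e s = β₁ s := by rw [heF]; simp [hF, hs]
      rw [← this, OrderIso.symm_apply_apply]
    have hβ₂μ : 0 < β₂ μ := by
      have := h2m (le_refl (0:ℝ)) hμ hμ0
      rwa [h2z] at this
    refine ⟨fun t => β₃ (e.symm t) / β₂ μ, ⟨?_, ?_, ?_, ?_, ?_⟩, ?_⟩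
    · -- continuity
      have hGc : Continuous (e.symm : ℝ → ℝ) := e.symm.continuous
      have hmaps : Set.MapsTo (fun t => e.symm t) (Set.Ici 0) (Set.Ici 0) :=
        fun t ht => hGnn t ht
      exact ((h3c.comp hGc.continuousOn hmaps).div_const _)
    · -- strict mono
      intro a ha b hb hab
      have h1 : e.symm a < e.symm b := e.symm.strictMono hab
      have h2 := h3m (hGnn a ha) (hGnn b hb) h1
      exact div_lt_div_of_pos_right h2 hβ₂μ
    · simp [hG0, h3z]
    · intro t ht
      exact div_nonneg (h3n _ (hGnn t ht)) hβ₂μ.le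
    · intro M
      obtain ⟨s, hs, hsM⟩ := h3u (M * β₂ μ)
      refine ⟨β₁ s, h1n s hs, ?_⟩
      show M ≤ β₃ (e.symm (β₁ s)) / β₂ μ
      rw [hGβ s hs]
      rw [le_div_iff₀ hβ₂μ]
      exact hsM
    · intro s hs
      show β₃ (e.symm (β₁ s)) / β₂ μ * β₂ s ≤ β₃ s
      rw [hGβ s hs.1]
      rw [div_mul_eq_mul_div, div_le_iff₀ hβ₂μ]
      have h2le : β₂ s ≤ β₂ μ := by
        rcases eq_or_lt_of_le hs.2 with h | h
        · rw [h]
        · exact (h2m hs.1 hμ h).le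
      exact mul_le_mul_of_nonneg_left h2le (h3n s hs.1) |>.trans_eq (by ring) |>.trans_eq' (by ring)
end

section
/- Let α be a class K∞ function on [0,∞) and let F : ℝ^m ⇒ ℝ^m be a set-valued map such that ⟨w, y⟩ ≥ ‖y‖·α(‖y‖) for every y ∈ ℝ^m and every w ∈ F(y). Then for all u, y ∈ ℝ^m and all w ∈ F(y), 2⟨u, y⟩ ≤ ⟨y, w⟩ + 2·α⁻¹(2‖u‖)·‖u‖. -/
open scoped RealInnerProductSpace

theorem stmt_1 (m : ℕ) (α αinv : ℝ → ℝ) (hα : IsKInf α)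
    (hinv₁ : ∀ s ∈ Set.Ici (0:ℝ), αinv (α s) = s)
    (hinv₂ : ∀ s ∈ Set.Ici (0:ℝ), α (αinv s) = s)
    (hinv₃ : ∀ s ∈ Set.Ici (0:ℝ), 0 ≤ αinv s)
    (F : EuclideanSpace ℝ (Fin m) → Set (EuclideanSpace ℝ (Fin m)))
    (hF : ∀ y : EuclideanSpace ℝ (Fin m), ∀ w ∈ F y, ⟪w, y⟫ ≥ ‖y‖ * α ‖y‖) :
    ∀ (u y : EuclideanSpace ℝ (Fin m)), ∀ w ∈ F y,
      2 * ⟪u, y⟫ ≤ ⟪y, w⟫ + 2 * αinv (2 * ‖u‖) * ‖u‖ := by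
  intro u y w hw
  obtain ⟨-, hmono, -, hnn, -⟩ := hα
  have hyw : ⟪y, w⟫ ≥ ‖y‖ * α ‖y‖ := by
    rw [real_inner_comm]; exact hF y w hw
  have hcs : 2 * ⟪u, y⟫ ≤ 2 * (‖u‖ * ‖y‖) := by
    have := real_inner_le_norm u y
    linarith
  have hu0 : (0:ℝ) ≤ 2 * ‖u‖ := by positivity
  have hinv0 : 0 ≤ αinv (2 * ‖u‖) := hinv₃ _ hu0
  rcases le_or_gt (α ‖y‖) (2 * ‖u‖) with hcase | hcase
  · -- then ‖y‖ ≤ αinv (2‖u‖)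
    have hy : ‖y‖ ≤ αinv (2 * ‖u‖) := by
      have := hinv₂ _ hu0
      have := (hmono.le_iff_le (norm_nonneg y) hinv0).mp (by linarith)
      linarith
    have h1 : 2 * (‖u‖ * ‖y‖) ≤ 2 * αinv (2 * ‖u‖) * ‖u‖ := by
      nlinarith [norm_nonneg u]
    have h2 : (0:ℝ) ≤ ⟪y, w⟫ := le_trans (mul_nonneg (norm_nonneg y) (hnn _ (norm_nonneg y))) hyw
    linarith
  · have h1 : 2 * (‖u‖ * ‖y‖) ≤ α ‖y‖ * ‖y‖ := by
      nlinarith [norm_nonneg y]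
    nlinarith [norm_nonneg u]
end

section
/- Let θ be of class K∞, α : [0,∞) → [0,∞) continuous with α ≤ θ, and c, μ > 0 with c·μ ≥ 1, and let F(y) := { w ∈ ℝ^m : ‖w‖ ≤ θ(‖y‖), ⟨w,y⟩ ≥ ‖y‖·α(‖y‖), and (‖y‖ > μ → c·⟨w,y⟩ ≥ ‖w‖) }. Suppose (y_k) → y in ℝ^m and w_k ∈ F(y_k) for each k. Then (w_k) is bounded, and every cluster point w of (w_k) satisfies w ∈ F(y). Consequently F is upper hemicontinuous with compact values. -/
open scoped RealInnerProductSpace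

theorem stmt_5 (m : ℕ) (θ α : ℝ → ℝ) (hθ : IsKInf θ)
    (hαc : ContinuousOn α (Set.Ici 0))
    (hα : ∀ s ∈ Set.Ici (0:ℝ), 0 ≤ α s) (hαθ : ∀ s ∈ Set.Ici (0:ℝ), α s ≤ θ s)
    (c μ : ℝ) (hc : 0 < c) (hμ : 0 < μ) (hcμ : 1 ≤ c * μ)
    (F : EuclideanSpace ℝ (Fin m) → Set (EuclideanSpace ℝ (Fin m)))
    (hF : ∀ y, F y = {w : EuclideanSpace ℝ (Fin m) |
      ‖w‖ ≤ θ ‖y‖ ∧ ⟪w, y⟫ ≥ ‖y‖ * α ‖y‖ ∧ (‖y‖ > μ → c * ⟪w, y⟫ ≥ ‖w‖)}) :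
    (∀ (y : EuclideanSpace ℝ (Fin m)) (ys ws : ℕ → EuclideanSpace ℝ (Fin m)),
      Filter.Tendsto ys Filter.atTop (nhds y) → (∀ k, ws k ∈ F (ys k)) →
        (∃ R : ℝ, ∀ k, ‖ws k‖ ≤ R) ∧
        (∀ w : EuclideanSpace ℝ (Fin m), MapClusterPt w Filter.atTop ws → w ∈ F y)) ∧
    (∀ y, IsCompact (F y)) ∧
    (∀ (y : EuclideanSpace ℝ (Fin m)) (U : Set (EuclideanSpace ℝ (Fin m))),
      IsOpen U → F y ⊆ U → ∀ᶠ y' in nhds y, F y' ⊆ U) := by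
  let E := EuclideanSpace ℝ (Fin m)
  -- Part 1: the sequential statement
  have main : ∀ (y : E) (ys ws : ℕ → E),
      Filter.Tendsto ys Filter.atTop (nhds y) → (∀ k, ws k ∈ F (ys k)) →
        (∃ R : ℝ, ∀ k, ‖ws k‖ ≤ R) ∧
        (∀ w : E, MapClusterPt w Filter.atTop ws → w ∈ F y) := by
    intro y ys ws hys hws
    have hws' : ∀ k, ‖ws k‖ ≤ θ ‖ys k‖ ∧ ⟪ws k, ys k⟫ ≥ ‖ys k‖ * α ‖ys k‖ ∧
        (‖ys k‖ > μ → c * ⟪ws k, ys k⟫ ≥ ‖ws k‖) := by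
      intro k
      have := hws k
      rw [hF] at this
      exact this
    have hnys : Filter.Tendsto (fun k => ‖ys k‖) Filter.atTop (nhds ‖y‖) := hys.norm
    have hmemI : ∀ k, ‖ys k‖ ∈ Set.Ici (0:ℝ) := fun k => norm_nonneg _
    have hnwithin : Filter.Tendsto (fun k => ‖ys k‖) Filter.atTop
        (nhdsWithin ‖y‖ (Set.Ici 0)) :=
      tendsto_nhdsWithin_of_tendsto_nhds_of_eventually_within _ hnys
        (Filter.Eventually.of_forall hmemI)
    have hθys : Filter.Tendsto (fun k => θ ‖ys k‖) Filter.atTop (nhds (θ ‖y‖)) :=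
      ((hθ.1 ‖y‖ (norm_nonneg y)).tendsto).comp hnwithin
    have hαys : Filter.Tendsto (fun k => α ‖ys k‖) Filter.atTop (nhds (α ‖y‖)) :=
      ((hαc ‖y‖ (norm_nonneg y)).tendsto).comp hnwithin
    constructor
    · obtain ⟨R, hR⟩ := hθys.bddAbove_range
      refine ⟨R, fun k => (hws' k).1.trans ?_⟩
      exact hR (Set.mem_range_self k)
    · intro w hw
      obtain ⟨ψ, hψ, hwψ⟩ := TopologicalSpace.FirstCountableTopology.tendsto_subseq hw
      have hψat : Filter.Tendsto ψ Filter.atTop Filter.atTop := hψ.tendsto_atTop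
      have hyψ : Filter.Tendsto (fun k => ys (ψ k)) Filter.atTop (nhds y) := hys.comp hψat
      have hnψ : Filter.Tendsto (fun k => ‖ys (ψ k)‖) Filter.atTop (nhds ‖y‖) :=
        hnys.comp hψat
      have hθψ : Filter.Tendsto (fun k => θ ‖ys (ψ k)‖) Filter.atTop (nhds (θ ‖y‖)) :=
        hθys.comp hψat
      have hαψ : Filter.Tendsto (fun k => α ‖ys (ψ k)‖) Filter.atTop (nhds (α ‖y‖)) :=
        hαys.comp hψat
      have hinner : Filter.Tendsto (fun k => ⟪ws (ψ k), ys (ψ k)⟫) Filter.atTop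
          (nhds ⟪w, y⟫) := hwψ.inner hyψ
      rw [hF]
      refine ⟨?_, ?_, ?_⟩
      · exact le_of_tendsto_of_tendsto' hwψ.norm hθψ (fun k => (hws' (ψ k)).1)
      · exact le_of_tendsto_of_tendsto' (hnψ.mul hαψ) hinner (fun k => (hws' (ψ k)).2.1)
      · intro hyμ
        have hev : ∀ᶠ k in Filter.atTop, μ < ‖ys (ψ k)‖ := hnψ.eventually (eventually_gt_nhds hyμ)
        refine le_of_tendsto_of_tendsto hwψ.norm (hinner.const_mul c) ?_
        filter_upwards [hev] with k hk
        exact (hws' (ψ k)).2.2 hk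
  refine ⟨main, ?_, ?_⟩
  · -- compactness
    intro y
    have hin : Continuous fun w : E => ⟪w, y⟫ := continuous_id.inner continuous_const
    have hclosed : IsClosed (F y) := by
      rw [hF]
      have h1 : IsClosed {w : E | ‖w‖ ≤ θ ‖y‖} := isClosed_le continuous_norm continuous_const
      have h2 : IsClosed {w : E | ⟪w, y⟫ ≥ ‖y‖ * α ‖y‖} := isClosed_le continuous_const hin
      have h3 : IsClosed {w : E | ‖y‖ > μ → c * ⟪w, y⟫ ≥ ‖w‖} := by
        by_cases hyμ : ‖y‖ > μ
        · have : {w : E | ‖y‖ > μ → c * ⟪w, y⟫ ≥ ‖w‖} = {w : E | c * ⟪w, y⟫ ≥ ‖w‖} := by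
            ext w; simp [hyμ]
          rw [this]
          exact isClosed_le continuous_norm (continuous_const.mul hin)
        · have : {w : E | ‖y‖ > μ → c * ⟪w, y⟫ ≥ ‖w‖} = Set.univ := by
            ext w; simp [hyμ]
          rw [this]; exact isClosed_univ
      exact (h1.inter (h2.inter h3))
    have hsub : F y ⊆ Metric.closedBall (0:E) (θ ‖y‖) := by
      intro w hw
      rw [hF] at hw
      rw [Metric.mem_closedBall, dist_zero_right]
      exact hw.1
    exact (isCompact_closedBall (0:E) (θ ‖y‖)).of_isClosed_subset hclosed hsub
  · -- upper hemicontinuity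
    intro y U hU hFU
    by_contra h
    rw [Filter.not_eventually] at h
    have hseq : ∀ k : ℕ, ∃ y', dist y' y < 1/((k:ℝ)+1) ∧ ∃ w, w ∈ F y' ∧ w ∉ U := by
      intro k
      have hball : Metric.ball y (1/((k:ℝ)+1)) ∈ nhds y :=
        Metric.ball_mem_nhds y (by positivity)
      obtain ⟨y', hy1, hy2⟩ := (h.and_eventually hball).exists
      rw [Set.not_subset] at hy1
      obtain ⟨w, hw1, hw2⟩ := hy1
      exact ⟨y', by simpa [Metric.mem_ball] using hy2, w, hw1, hw2⟩
    choose ys hdist ws hwF hwU using hseq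
    have hd0 : Filter.Tendsto (fun k => dist (ys k) y) Filter.atTop (nhds 0) :=
      squeeze_zero (fun k => dist_nonneg) (fun k => (hdist k).le)
        tendsto_one_div_add_atTop_nhds_zero_nat
    have hys : Filter.Tendsto ys Filter.atTop (nhds y) :=
      tendsto_iff_dist_tendsto_zero.mpr hd0
    obtain ⟨⟨R, hR⟩, hclus⟩ := main y ys ws hys hwF
    have hball : ∀ k, ws k ∈ Metric.closedBall (0:E) R := by
      intro k; rw [Metric.mem_closedBall, dist_zero_right]; exact hR k
    obtain ⟨w, -, ψ, hψ, hwψ⟩ := (isCompact_closedBall (0:E) R).tendsto_subseq hball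
    have hwcl : MapClusterPt w Filter.atTop ws := MapClusterPt.of_comp hψ.tendsto_atTop hwψ.mapClusterPt
    have hwU' : w ∈ U := hFU (hclus w hwcl)
    have : ∀ᶠ k in Filter.atTop, ws (ψ k) ∈ U := hwψ.eventually (hU.mem_nhds hwU')
    obtain ⟨k, hk⟩ := this.exists
    exact hwU (ψ k) hk
end

section
/- Define g_d : ℝ → ℝ by g_d(z) = z·|z|^d for a natural number d ≥ 1. Then there is a constant c_d > 0 such that (z₁ − z₂)·(g_d(z₁) − g_d(z₂)) ≥ c_d·|z₁ − z₂|^{d+2} for all z₁, z₂ ∈ ℝ. -/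
lemma caseB_aux (d : ℕ) (z₁ z₂ : ℝ) (h2 : 0 ≤ z₂) (h12 : z₂ ≤ z₁) :
    (z₁ - z₂) ^ (d + 2) ≤ (z₁ - z₂) * (z₁ * |z₁| ^ d - z₂ * |z₂| ^ d) := by
  have h1 : (0:ℝ) ≤ z₁ := h2.trans h12
  rw [abs_of_nonneg h1, abs_of_nonneg h2]
  have hsub : (0:ℝ) ≤ z₁ - z₂ := sub_nonneg.2 h12
  have key : (z₁ - z₂) ^ (d+1) + z₂ ^ (d+1) ≤ z₁ ^ (d+1) := by
    have := pow_add_pow_le hsub h2 (Nat.succ_ne_zero d)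
    simpa using this
  have hle : (z₁ - z₂) ^ (d+1) ≤ z₁ ^ (d+1) - z₂ ^ (d+1) := by
    have hz : (0:ℝ) ≤ z₂ ^ (d+1) := pow_nonneg h2 _
    linarith
  have heq : z₁ * z₁ ^ d - z₂ * z₂ ^ d = z₁ ^ (d+1) - z₂ ^ (d+1) := by ring
  calc (z₁ - z₂) ^ (d + 2) = (z₁ - z₂) * (z₁ - z₂) ^ (d+1) := by ring
    _ ≤ (z₁ - z₂) * (z₁ ^ (d+1) - z₂ ^ (d+1)) :=
        mul_le_mul_of_nonneg_left hle hsub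
    _ = (z₁ - z₂) * (z₁ * z₁ ^ d - z₂ * z₂ ^ d) := by rw [heq]

lemma key_aux (d : ℕ) (z₁ z₂ : ℝ) (h : z₂ ≤ z₁) :
    ((1:ℝ)/2) ^ (d+1) * |z₁ - z₂| ^ (d + 2) ≤
      (z₁ - z₂) * (z₁ * |z₁| ^ d - z₂ * |z₂| ^ d) := by
  have hsub : (0:ℝ) ≤ z₁ - z₂ := sub_nonneg.2 h
  have habs : |z₁ - z₂| = z₁ - z₂ := abs_of_nonneg hsub
  have hc1 : ((1:ℝ)/2) ^ (d+1) ≤ 1 := by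
    apply pow_le_one₀ <;> norm_num
  have hc0 : (0:ℝ) ≤ ((1:ℝ)/2) ^ (d+1) := by positivity
  rcases le_or_gt 0 z₂ with h2 | h2
  · have hB := caseB_aux d z₁ z₂ h2 h
    have hp : (0:ℝ) ≤ (z₁ - z₂) ^ (d+2) := pow_nonneg hsub _
    rw [habs]
    nlinarith
  rcases le_or_gt z₁ 0 with h1 | h1
  · have hB := caseB_aux d (-z₂) (-z₁) (by linarith) (by linarith)
    rw [abs_neg, abs_neg, show (-z₂ - -z₁) = z₁ - z₂ from by ring] at hB
    have heq : (z₁ - z₂) * (-z₂ * |z₂| ^ d - -z₁ * |z₁| ^ d)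
        = (z₁ - z₂) * (z₁ * |z₁| ^ d - z₂ * |z₂| ^ d) := by ring
    rw [habs]
    have hp : (0:ℝ) ≤ (z₁ - z₂) ^ (d+2) := pow_nonneg hsub _
    nlinarith
  · -- mixed case: z₂ < 0 < z₁
    rw [habs, abs_of_pos h1, abs_of_neg h2]
    have key2 : ((1:ℝ)/2) ^ (d+1) * (z₁ - z₂) ^ (d+1)
        ≤ z₁ ^ (d+1) + (-z₂) ^ (d+1) := by
      rw [← mul_pow]
      rcases le_total z₁ (-z₂) with hab | hab
      · have h1' : (1/2) * (z₁ - z₂) ≤ -z₂ := by linarith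
        have h0 : (0:ℝ) ≤ (1/2) * (z₁ - z₂) := by linarith
        have := pow_le_pow_left₀ h0 h1' (d+1)
        have hz : (0:ℝ) ≤ z₁ ^ (d+1) := pow_nonneg (le_of_lt h1) _
        linarith
      · have h1' : (1/2) * (z₁ - z₂) ≤ z₁ := by linarith
        have h0 : (0:ℝ) ≤ (1/2) * (z₁ - z₂) := by linarith
        have := pow_le_pow_left₀ h0 h1' (d+1)
        have hz : (0:ℝ) ≤ (-z₂) ^ (d+1) := pow_nonneg (by linarith) _
        linarith
    have heq : z₁ * z₁ ^ d - z₂ * (-z₂) ^ d = z₁ ^ (d+1) + (-z₂) ^ (d+1) := by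
      ring
    have expand : (z₁ - z₂) ^ (d + 2) = (z₁ - z₂) ^ (d+1) * (z₁ - z₂) := by ring
    rw [heq, expand]
    nlinarith [key2, hsub]

theorem stmt_8 (d : ℕ) (hd : 1 ≤ d) :
    ∃ c : ℝ, 0 < c ∧ ∀ z₁ z₂ : ℝ,
      c * |z₁ - z₂| ^ (d + 2) ≤ (z₁ - z₂) * (z₁ * |z₁| ^ d - z₂ * |z₂| ^ d) := by
  refine ⟨((1:ℝ)/2) ^ (d+1), by positivity, fun z₁ z₂ => ?_⟩
  rcases le_total z₂ z₁ with h | h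
  · exact key_aux d z₁ z₂ h
  · have hk := key_aux d z₂ z₁ h
    rw [abs_sub_comm] at hk
    have heq : (z₂ - z₁) * (z₂ * |z₂| ^ d - z₁ * |z₁| ^ d)
        = (z₁ - z₂) * (z₁ * |z₁| ^ d - z₂ * |z₂| ^ d) := by ring
    linarith
end

section
/- Let f : ℝ^m → ℝ^m be continuous (e.g., locally Lipschitz) and Γ ⊂ ℝ^m compact and nonempty. Suppose that for every y ≠ 0, inf_{z ∈ Γ} ⟨y, f(y+z) − f(z)⟩/‖y‖ > 0, and that this infimum tends to 0 as ‖y‖ → 0. Then there exists a continuous function α : [0,∞) → [0,∞) with α(0) = 0 and α(s) > 0 for s > 0, such that ⟨y, f(y+z) − f(z)⟩ ≥ ‖y‖·α(‖y‖) for all y ∈ ℝ^m and all z ∈ Γ. -/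
open scoped RealInnerProductSpace

theorem stmt_12 (m : ℕ)
    (f : EuclideanSpace ℝ (Fin m) → EuclideanSpace ℝ (Fin m)) (hf : Continuous f)
    (Γ : Set (EuclideanSpace ℝ (Fin m))) (hΓc : IsCompact Γ) (hΓne : Γ.Nonempty)
    (hpos : ∀ y : EuclideanSpace ℝ (Fin m), y ≠ 0 →
      0 < sInf ((fun z => ⟪y, f (y + z) - f z⟫ / ‖y‖) '' Γ))
    (hlim : Filter.Tendsto
      (fun y : EuclideanSpace ℝ (Fin m) => sInf ((fun z => ⟪y, f (y + z) - f z⟫ / ‖y‖) '' Γ))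
      (nhdsWithin 0 {y | y ≠ 0}) (nhds 0)) :
    ∃ α : ℝ → ℝ, ContinuousOn α (Set.Ici 0) ∧ α 0 = 0 ∧
      (∀ s : ℝ, 0 < s → 0 < α s) ∧ (∀ s ∈ Set.Ici (0:ℝ), 0 ≤ α s) ∧
      ∀ (y : EuclideanSpace ℝ (Fin m)), ∀ z ∈ Γ,
        ‖y‖ * α ‖y‖ ≤ ⟪y, f (y + z) - f z⟫ := by
  classical
  rcases Nat.eq_zero_or_pos m with hm | hm
  · -- trivial case: the space is a singleton
    subst hm
    refine ⟨fun s => s, continuousOn_id, rfl, fun s hs => hs, fun s hs => hs, ?_⟩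
    intro y z hz
    have hy : y = 0 := Subsingleton.elim y 0
    simp [hy]
  · -- the nontrivial case
    set g : EuclideanSpace ℝ (Fin m) → ℝ := fun y => sInf ((fun z => ⟪y, f (y + z) - f z⟫ / ‖y‖) '' Γ) with hg_def
    set G : EuclideanSpace ℝ (Fin m) → ℝ := fun y => sInf ((fun z => ⟪y, f (y + z) - f z⟫) '' Γ) with hG_def
    have hFc : Continuous fun p : EuclideanSpace ℝ (Fin m) × EuclideanSpace ℝ (Fin m) =>
        ⟪p.1, f (p.1 + p.2) - f p.2⟫ := by
      apply Continuous.inner continuous_fst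
      exact (hf.comp (continuous_fst.add continuous_snd)).sub (hf.comp continuous_snd)
    have hGcont : Continuous G :=
      hΓc.continuous_sInf (f := fun y z => ⟪y, f (y + z) - f z⟫) hFc
    set β : ℝ → ℝ := fun s => sInf ((fun u : EuclideanSpace ℝ (Fin m) => G (s • u)) '' Metric.sphere 0 1) with hβ_def
    have hβcont : Continuous β :=
      (isCompact_sphere (0 : EuclideanSpace ℝ (Fin m)) 1).continuous_sInf
        (f := fun (s : ℝ) (u : EuclideanSpace ℝ (Fin m)) => G (s • u))
        (hGcont.comp (continuous_fst.smul continuous_snd))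
    -- relation between g and G
    have hgG : ∀ y : EuclideanSpace ℝ (Fin m), y ≠ 0 → g y = G y / ‖y‖ := by
      intro y hy
      have hy' : (0:ℝ) < ‖y‖ := norm_pos_iff.mpr hy
      have hcomp : (fun z => ⟪y, f (y + z) - f z⟫ / ‖y‖) =
          (fun t : ℝ => ‖y‖⁻¹ • t) ∘ fun z => ⟪y, f (y + z) - f z⟫ := by
        funext z; simp [div_eq_inv_mul, Function.comp]
      rw [hg_def]
      simp only [hcomp, Set.image_comp]
      rw [Set.image_smul, Real.sInf_smul_of_nonneg (inv_nonneg.mpr hy'.le)]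
      rw [smul_eq_mul, inv_mul_eq_div, hG_def]
    -- basic bounds
    have hGle : ∀ y : EuclideanSpace ℝ (Fin m), ∀ z ∈ Γ, G y ≤ ⟪y, f (y + z) - f z⟫ := by
      intro y z hz
      have hc : Continuous fun w : EuclideanSpace ℝ (Fin m) => ⟪y, f (y + w) - f w⟫ := by
        apply Continuous.inner continuous_const
        exact (hf.comp (continuous_const.add continuous_id)).sub hf
      exact csInf_le (hΓc.image hc).bddBelow ⟨z, hz, rfl⟩
    have hβle : ∀ s : ℝ, ∀ u ∈ Metric.sphere (0:EuclideanSpace ℝ (Fin m)) 1,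
        β s ≤ G (s • u) := by
      intro s u hu
      have hcpt' : IsCompact ((fun u : EuclideanSpace ℝ (Fin m) => G (s • u)) '' Metric.sphere 0 1) :=
        (isCompact_sphere (0:EuclideanSpace ℝ (Fin m)) 1).image
          (hGcont.comp (continuous_const_smul s))
      exact csInf_le hcpt'.bddBelow ⟨u, hu, rfl⟩
    -- the sphere is nonempty
    obtain ⟨u₀, hu₀⟩ : ∃ u : EuclideanSpace ℝ (Fin m), u ∈ Metric.sphere (0:EuclideanSpace ℝ (Fin m)) 1 := by
      refine ⟨EuclideanSpace.single ⟨0, hm⟩ (1:ℝ), ?_⟩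
      simp [mem_sphere_zero_iff_norm, EuclideanSpace.norm_single]
    have hu₀ne : u₀ ≠ 0 := by
      intro h
      rw [mem_sphere_zero_iff_norm, h, norm_zero] at hu₀
      norm_num at hu₀
    -- positivity of β on positive reals
    have hGpos : ∀ y : EuclideanSpace ℝ (Fin m), y ≠ 0 → 0 < G y := by
      intro y hy
      have h1 : 0 < g y := hpos y hy
      have h2 : G y = ‖y‖ * g y := by
        rw [hgG y hy, mul_comm, div_mul_cancel₀ _ (norm_ne_zero_iff.mpr hy)]
      rw [h2]
      exact mul_pos (norm_pos_iff.mpr hy) h1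
    have hβpos : ∀ s : ℝ, 0 < s → 0 < β s := by
      intro s hs
      have hne : ((fun u : EuclideanSpace ℝ (Fin m) => G (s • u)) '' Metric.sphere 0 1).Nonempty :=
        ⟨_, ⟨u₀, hu₀, rfl⟩⟩
      have hcpt : IsCompact ((fun u : EuclideanSpace ℝ (Fin m) => G (s • u)) '' Metric.sphere 0 1) :=
        (isCompact_sphere (0:EuclideanSpace ℝ (Fin m)) 1).image
          (hGcont.comp (continuous_const_smul s))
      have hmem := hcpt.sInf_mem hne
      obtain ⟨u, hu, hequ⟩ := hmem
      have hβs : β s = G (s • u) := hequ.symm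
      rw [hβs]
      refine hGpos _ (smul_ne_zero hs.ne' ?_)
      intro h
      rw [mem_sphere_zero_iff_norm, h, norm_zero] at hu
      norm_num at hu
    refine ⟨fun s => if s ≤ 0 then 0 else β s / s, ?_, by simp, ?_, ?_, ?_⟩
    · -- continuity on [0, ∞)
      intro s hs
      rcases eq_or_lt_of_le (Set.mem_Ici.mp hs) with h0 | h0
      · -- continuity at 0 within Ici 0
        subst h0
        rw [← Set.Ioi_insert]
        rw [continuousWithinAt_insert_self]
        have h00 : (fun s : ℝ => if s ≤ 0 then (0:ℝ) else β s / s) 0 = 0 := by norm_num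
        rw [ContinuousWithinAt]
        rw [if_pos le_rfl]
        have hub : Filter.Tendsto (fun s : ℝ => g (s • u₀)) (nhdsWithin 0 (Set.Ioi 0))
            (nhds 0) := by
          apply hlim.comp
          rw [tendsto_nhdsWithin_iff]
          constructor
          · have : Filter.Tendsto (fun s : ℝ => s • u₀) (nhds 0) (nhds ((0:ℝ) • u₀)) :=
              (continuous_id.smul continuous_const).tendsto 0
            rw [zero_smul] at this
            exact this.mono_left nhdsWithin_le_nhds
          · filter_upwards [self_mem_nhdsWithin] with s hs
            exact smul_ne_zero (ne_of_gt hs) hu₀ne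
        refine squeeze_zero' ?_ ?_ hub
        · filter_upwards [self_mem_nhdsWithin] with s hs
          rcases le_or_gt s 0 with h | h
          · simp [h]
          · simp only [not_le.mpr h, if_false]
            exact (div_pos (hβpos s h) h).le
        · filter_upwards [self_mem_nhdsWithin] with s hs
          have hs' : (0:ℝ) < s := hs
          simp only [not_le.mpr hs', if_false]
          have hsu : ‖s • u₀‖ = s := by
            rw [norm_smul, mem_sphere_zero_iff_norm.mp hu₀]
            simp [abs_of_pos hs']
          rw [hgG _ (smul_ne_zero hs'.ne' hu₀ne), hsu]
          exact div_le_div_of_nonneg_right (hβle s u₀ hu₀) hs'.le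
      · -- continuity at s > 0
        apply ContinuousAt.continuousWithinAt
        have hev : (fun t : ℝ => β t / t) =ᶠ[nhds s] fun t => if t ≤ 0 then 0 else β t / t := by
          filter_upwards [lt_mem_nhds h0] with t ht
          simp [not_le.mpr ht]
        exact ContinuousAt.congr (hβcont.continuousAt.div continuousAt_id h0.ne') hev
    · intro s hs
      simp only [not_le.mpr hs, if_false]
      exact div_pos (hβpos s hs) hs
    · intro s hs
      rcases le_or_gt s 0 with h | h
      · simp [h]
      · simp only [not_le.mpr h, if_false]
        exact (div_pos (hβpos s h) h).le
    · intro y z hz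
      rcases eq_or_ne y 0 with rfl | hy
      · simp
      · have hy' : (0:ℝ) < ‖y‖ := norm_pos_iff.mpr hy
        simp only [not_le.mpr hy', if_false]
        rw [mul_div_cancel₀ _ hy'.ne']
        calc β ‖y‖ ≤ G (‖y‖ • (‖y‖⁻¹ • y)) := by
              apply hβle
              rw [mem_sphere_zero_iff_norm, norm_smul, norm_inv, norm_norm]
              field_simp
          _ = G y := by rw [smul_smul, mul_inv_cancel₀ hy'.ne', one_smul]
          _ ≤ ⟪y, f (y + z) - f z⟫ := hGle y z hz
end

section
/- Let A ∈ ℝ^{n×n}, B ∈ ℝ^{n×m}, C ∈ ℝ^{m×n}, let P ∈ ℝ^{n×n} be symmetric positive definite and ε > 0 such that the block matrix [[AᵀP + PA + εI, PB − Cᵀ],[BᵀP − C, 0]] is negative semi-definite. Then there exist ε₀, ε₁ > 0 such that for all z ∈ ℝ^n and u, w ∈ ℝ^m with ⟨w, Cz⟩ ≥ 0: 2⟨Pz, Az − B(w − u)⟩ ≤ −ε₀‖z‖² + ε₁‖u‖². -/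
open Matrix

theorem stmt_17 (n m : ℕ) (ε : ℝ) (hε : 0 < ε)
    (A : Matrix (Fin n) (Fin n) ℝ) (B : Matrix (Fin n) (Fin m) ℝ)
    (C : Matrix (Fin m) (Fin n) ℝ) (P : Matrix (Fin n) (Fin n) ℝ)
    (hPsymm : Pᵀ = P) (hPpd : P.PosDef)
    (hLMI : (-(Matrix.fromBlocks (Aᵀ * P + P * A + ε • (1 : Matrix (Fin n) (Fin n) ℝ))
      (P * B - Cᵀ) (Bᵀ * P - C) (0 : Matrix (Fin m) (Fin m) ℝ))).PosSemidef) :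
    ∃ ε₀ : ℝ, 0 < ε₀ ∧ ∃ ε₁ : ℝ, 0 < ε₁ ∧
      ∀ (z : Fin n → ℝ) (u w : Fin m → ℝ), 0 ≤ w ⬝ᵥ C.mulVec z →
        2 * (P.mulVec z ⬝ᵥ (A.mulVec z - B.mulVec (w - u))) ≤
          -ε₀ * (z ⬝ᵥ z) + ε₁ * (u ⬝ᵥ u) := by
  -- constant K bounding ‖Cz‖² ≤ K ‖z‖²
  set K : ℝ := ∑ i, ∑ j, (C i j)^2 with hK
  have hK0 : 0 ≤ K := Finset.sum_nonneg fun i _ => Finset.sum_nonneg fun j _ => sq_nonneg _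
  have hK1 : 0 < K + 1 := by linarith
  set δ : ℝ := ε / (2 * (K + 1)) with hδ
  have hδ0 : 0 < δ := div_pos hε (by linarith)
  refine ⟨ε / 2, by linarith, 1 / δ, by positivity, ?_⟩
  intro z u w hw
  -- the LMI inequality with v := u - w
  set v : Fin m → ℝ := u - w with hv
  have key : 2 * ((P *ᵥ z) ⬝ᵥ (A *ᵥ z)) + 2 * ((P *ᵥ z) ⬝ᵥ (B *ᵥ v)) + ε * (z ⬝ᵥ z)
      - 2 * (v ⬝ᵥ C *ᵥ z) ≤ 0 := by
    have h0 := hLMI.dotProduct_mulVec_nonneg (Sum.elim z v)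
    simp only [star_trivial, neg_mulVec, dotProduct_neg, fromBlocks_mulVec,
      Sum.elim_comp_inl, Sum.elim_comp_inr, sumElim_dotProduct_sumElim,
      add_mulVec, sub_mulVec, smul_mulVec, one_mulVec, zero_mulVec, add_zero,
      dotProduct_add, dotProduct_sub, dotProduct_smul, smul_eq_mul,
      ← mulVec_mulVec] at h0
    have e1 : z ⬝ᵥ Aᵀ *ᵥ (P *ᵥ z) = (A *ᵥ z) ⬝ᵥ (P *ᵥ z) := by
      rw [dotProduct_mulVec, vecMul_transpose]
    have e2 : ∀ x : Fin n → ℝ, z ⬝ᵥ P *ᵥ x = (P *ᵥ z) ⬝ᵥ x := by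
      intro x; rw [dotProduct_mulVec]; conv_lhs => rw [← hPsymm, vecMul_transpose]
    have e3 : z ⬝ᵥ Cᵀ *ᵥ v = v ⬝ᵥ C *ᵥ z := by
      rw [dotProduct_mulVec, vecMul_transpose, dotProduct_comm]
    have e4 : v ⬝ᵥ Bᵀ *ᵥ (P *ᵥ z) = (P *ᵥ z) ⬝ᵥ (B *ᵥ v) := by
      rw [dotProduct_mulVec, vecMul_transpose, dotProduct_comm]
    have e5 : (A *ᵥ z) ⬝ᵥ (P *ᵥ z) = (P *ᵥ z) ⬝ᵥ (A *ᵥ z) := dotProduct_comm _ _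
    rw [e1, e2, e2, e3, e4, e5] at h0
    linarith
  -- ‖Cz‖² ≤ K ‖z‖²
  have hCz : (C *ᵥ z) ⬝ᵥ (C *ᵥ z) ≤ K * (z ⬝ᵥ z) := by
    have : ∀ i : Fin m, (C *ᵥ z) i * (C *ᵥ z) i ≤ (∑ j, (C i j)^2) * (z ⬝ᵥ z) := by
      intro i
      have h := Finset.sum_mul_sq_le_sq_mul_sq Finset.univ (fun j => C i j) z
      have hz : z ⬝ᵥ z = ∑ j, (z j)^2 := by simp [dotProduct, sq]
      have hm : (C *ᵥ z) i = ∑ j, C i j * z j := rfl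
      calc (C *ᵥ z) i * (C *ᵥ z) i = (∑ j, C i j * z j)^2 := by rw [hm]; ring
        _ ≤ (∑ j, (C i j)^2) * ∑ j, (z j)^2 := h
        _ = (∑ j, (C i j)^2) * (z ⬝ᵥ z) := by rw [hz]
    calc (C *ᵥ z) ⬝ᵥ (C *ᵥ z) = ∑ i, (C *ᵥ z) i * (C *ᵥ z) i := rfl
      _ ≤ ∑ i, (∑ j, (C i j)^2) * (z ⬝ᵥ z) := Finset.sum_le_sum fun i _ => this i
      _ = K * (z ⬝ᵥ z) := by rw [hK, Finset.sum_mul]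
  -- Young: 2 u⬝(Cz) ≤ δ ‖Cz‖² + (1/δ) ‖u‖²
  have hYoung : 2 * (u ⬝ᵥ C *ᵥ z) ≤ δ * ((C *ᵥ z) ⬝ᵥ (C *ᵥ z)) + (1/δ) * (u ⬝ᵥ u) := by
    have : ∀ i : Fin m, 2 * (u i * (C *ᵥ z) i) ≤ δ * ((C *ᵥ z) i * (C *ᵥ z) i)
        + (1/δ) * (u i * u i) := by
      intro i
      set a := (C *ᵥ z) i
      set b := u i
      have h := sq_nonneg (δ * a - b)
      have h2 : δ * (2 * (b * a)) ≤ δ * (δ * (a * a) + (1/δ) * (b * b)) := by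
        have hd : δ * ((1/δ) * (b * b)) = b * b := by field_simp
        nlinarith
      exact le_of_mul_le_mul_left h2 hδ0
    calc 2 * (u ⬝ᵥ C *ᵥ z) = ∑ i, 2 * (u i * (C *ᵥ z) i) := by
          simp [dotProduct, Finset.mul_sum]
      _ ≤ ∑ i, (δ * ((C *ᵥ z) i * (C *ᵥ z) i) + (1/δ) * (u i * u i)) :=
          Finset.sum_le_sum fun i _ => this i
      _ = δ * ((C *ᵥ z) ⬝ᵥ (C *ᵥ z)) + (1/δ) * (u ⬝ᵥ u) := by
          simp [dotProduct, Finset.mul_sum, Finset.sum_add_distrib]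
  -- relate goal LHS to key
  have hBv : B *ᵥ (w - u) = -(B *ᵥ v) := by
    rw [hv, ← Matrix.mulVec_neg, neg_sub]
  have hgoal : P *ᵥ z ⬝ᵥ (A *ᵥ z - B *ᵥ (w - u)) =
      (P *ᵥ z) ⬝ᵥ (A *ᵥ z) + (P *ᵥ z) ⬝ᵥ (B *ᵥ v) := by
    rw [hBv, dotProduct_sub, dotProduct_neg, sub_neg_eq_add]
  have hvCz : v ⬝ᵥ C *ᵥ z = u ⬝ᵥ C *ᵥ z - w ⬝ᵥ C *ᵥ z := by
    rw [hv, sub_dotProduct]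
  have hδK : δ * K ≤ ε / 2 := by
    rw [hδ, div_mul_eq_mul_div, div_le_div_iff₀ (by linarith) (by norm_num)]
    nlinarith
  have hCz2 : δ * ((C *ᵥ z) ⬝ᵥ (C *ᵥ z)) ≤ (ε/2) * (z ⬝ᵥ z) := by
    have h1 : δ * ((C *ᵥ z) ⬝ᵥ (C *ᵥ z)) ≤ δ * (K * (z ⬝ᵥ z)) :=
      mul_le_mul_of_nonneg_left hCz (le_of_lt hδ0)
    have hz0 : 0 ≤ z ⬝ᵥ z := by
      simp only [dotProduct]; exact Finset.sum_nonneg fun i _ => mul_self_nonneg _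
    nlinarith
  rw [show Matrix.mulVec P z = P *ᵥ z from rfl, hgoal]
  linarith
end
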